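/- Let s : ℝ^d → ℝ be a scoring function such that F_s admits a Lebesgue density f_s which is differentiable with |f_s'(t)| ≤ M for all t, and let φ : [0,1] → ℝ be continuously differentiable with ‖φ'‖_∞ = sup_{u∈[0,1]}|φ'(u)|. Let K : ℝ → ℝ be a nonnegative integrable kernel with K(−u) = K(u), ∫ K(u) du = 1 and μ₂ := ∫ u²·K(u) du < ∞, set κ(t) = ∫_{−∞}^t K(u) du, F̃_{s,h}(t) = ∫ κ((t−u)/h) dF_s(u) for h > 0, and define the smoothed ranking criterion W̃_{φ,h}(s) = E[φ(F̃_{s,h}(s(X)))]. Then for every h > 0, |W̃_{φ,h}(s) − W_φ(s)| ≤ ‖φ'‖_∞·(M/2)·h²·μ₂. -/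

import Mathlib

open MeasureTheory
open scoped ENNReal

noncomputable section

/-- cdf of the image of `μ` by the scoring function `s`. -/
def scoreCDF {d : ℕ} (μ : Measure (Fin d → ℝ)) (s : (Fin d → ℝ) → ℝ) (t : ℝ) : ℝ :=
  ((μ.map s) (Set.Iic t)).toReal

/-- pooled cdf `F_s = p G_s + (1-p) H_s`. -/
def pooledCDF {d : ℕ} (G H : Measure (Fin d → ℝ)) (p : ℝ) (s : (Fin d → ℝ) → ℝ)
    (t : ℝ) : ℝ :=
  p * scoreCDF G s t + (1 - p) * scoreCDF H s t

/-- `W_φ`-ranking performance of `s` : `E[φ(F_s(s(X)))]` with `X ~ G`. -/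
def Wperf {d : ℕ} (G H : Measure (Fin d → ℝ)) (p : ℝ) (φ : ℝ → ℝ)
    (s : (Fin d → ℝ) → ℝ) : ℝ :=
  ∫ x, φ (pooledCDF G H p s (s x)) ∂G

/-- kernel-smoothed pooled cdf `F̃_{s,h}(t) = ∫ κ((t−u)/h) dF_s(u)`, where
`κ(t) = ∫_{−∞}^t K` and `F_s = p·s_#G + (1−p)·s_#H`. -/
def smoothedCDF {d : ℕ} (G H : Measure (Fin d → ℝ)) (p : ℝ) (s : (Fin d → ℝ) → ℝ)
    (K : ℝ → ℝ) (h t : ℝ) : ℝ :=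
  ∫ u, (∫ v in Set.Iic ((t - u) / h), K v)
    ∂(ENNReal.ofReal p • G.map s + ENNReal.ofReal (1 - p) • H.map s)

/-- smoothed ranking criterion `W̃_{φ,h}(s) = E[φ(F̃_{s,h}(s(X)))]`. -/
def Wsmooth {d : ℕ} (G H : Measure (Fin d → ℝ)) (p : ℝ) (φ : ℝ → ℝ)
    (s : (Fin d → ℝ) → ℝ) (K : ℝ → ℝ) (h : ℝ) : ℝ :=
  ∫ x, φ (smoothedCDF G H p s K h (s x)) ∂G


-- derivative of x ↦ x*|x|/2 is |x|
lemma hasDerivAt_mul_abs (x : ℝ) : HasDerivAt (fun y : ℝ => y * |y| / 2) |x| x := by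
  rcases lt_trichotomy x 0 with hx | hx | hx
  · have heq : (fun y : ℝ => y * |y| / 2) =ᶠ[nhds x] fun y => -(y * y) / 2 := by
      filter_upwards [eventually_lt_nhds hx] with y hy
      rw [abs_of_neg hy]; ring
    have h2 : HasDerivAt (fun y : ℝ => -(y * y) / 2) |x| x := by
      have := ((hasDerivAt_id x).mul (hasDerivAt_id x)).neg.div_const 2
      have hd : -(1 * id x + id x * 1) / 2 = |x| := by simp [id, abs_of_neg hx]
      rw [hd] at this; exact this
    exact h2.congr_of_eventuallyEq heq
  · subst hx
    rw [hasDerivAt_iff_tendsto_slope]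
    have key : ∀ y : ℝ, y ≠ 0 → slope (fun y : ℝ => y * |y| / 2) 0 y = |y| / 2 := by
      intro y hy
      field_simp [slope]
      simp [slope]
      field_simp
    have h2 : Filter.Tendsto (fun y : ℝ => |y| / 2) (nhdsWithin 0 {(0:ℝ)}ᶜ) (nhds |(0:ℝ)|) := by
      apply Filter.Tendsto.mono_left _ nhdsWithin_le_nhds
      simpa using (continuous_abs.div_const 2).tendsto (0:ℝ)
    refine Filter.Tendsto.congr' ?_ (by simpa using h2)
    filter_upwards [self_mem_nhdsWithin] with y hy
    exact (key y hy).symm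
  · have heq : (fun y : ℝ => y * |y| / 2) =ᶠ[nhds x] fun y => y * y / 2 := by
      filter_upwards [eventually_gt_nhds hx] with y hy
      rw [abs_of_pos hy]
    have h2 : HasDerivAt (fun y : ℝ => y * y / 2) |x| x := by
      have := ((hasDerivAt_id x).mul (hasDerivAt_id x)).div_const 2
      have hd : (1 * id x + id x * 1) / 2 = |x| := by simp [id, abs_of_pos hx]
      rw [hd] at this; exact this
    exact h2.congr_of_eventuallyEq heq

lemma integral_abs_sub (t a : ℝ) : ∫ w in t..(t - a), |w - t| = -a * |a| / 2 := by
  have h1 : ∀ w ∈ Set.uIcc t (t - a), HasDerivAt (fun y => (y - t) * |y - t| / 2) |w - t| w := by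
    intro w _
    have := (hasDerivAt_mul_abs (w - t)).comp w ((hasDerivAt_id w).sub_const t)
    simpa [Function.comp_def] using this
  have h2 : IntervalIntegrable (fun w => |w - t|) volume t (t - a) :=
    (continuous_abs.comp (continuous_id.sub continuous_const)).intervalIntegrable _ _
  rw [intervalIntegral.integral_eq_sub_of_hasDerivAt h1 h2]
  simp

-- Fubini: smoothed cdf as kernel average of the cdf
lemma fubini_smooth (μ : Measure ℝ) [IsProbabilityMeasure μ] (K : ℝ → ℝ)
    (hKpos : ∀ u, 0 ≤ K u) (hKint : Integrable K) (h : ℝ) (hh : 0 < h) (t : ℝ) :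
    ∫ u, (∫ v in Set.Iic ((t - u) / h), K v) ∂μ
      = ∫ v, K v * (μ (Set.Iic (t - h * v))).toReal := by
  classical
  set Kl : ℝ → ℝ≥0∞ := fun v => ENNReal.ofReal (K v) with hKl
  have hKlm : AEMeasurable Kl volume := hKint.aemeasurable.ennreal_ofReal
  have hKltot : (∫⁻ v, Kl v) ≠ ⊤ := by
    have := hKint.2
    rw [hasFiniteIntegral_iff_ofReal (Filter.Eventually.of_forall hKpos)] at this
    exact this.ne
  -- the product set
  set S : Set (ℝ × ℝ) := {q : ℝ × ℝ | q.1 + h * q.2 ≤ t} with hS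
  have hSmeas : MeasurableSet S := by
    apply measurableSet_le
    · exact (measurable_fst.add (measurable_snd.const_mul h))
    · exact measurable_const
  have hmem : ∀ u v : ℝ, v ∈ Set.Iic ((t - u) / h) ↔ (u, v) ∈ S := by
    intro u v
    simp only [Set.mem_Iic, hS, Set.mem_setOf_eq]
    rw [le_div_iff₀ hh]
    constructor <;> intro hx <;> nlinarith
  -- step 1: inner integral as lintegral
  have step1 : ∀ u : ℝ, (∫ v in Set.Iic ((t - u) / h), K v)
      = (∫⁻ v, Kl v * S.indicator (fun _ => 1) (u, v)).toReal := by
    intro u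
    rw [MeasureTheory.integral_eq_lintegral_of_nonneg_ae
      (Filter.Eventually.of_forall hKpos) hKint.aestronglyMeasurable.restrict]
    congr 1
    rw [← lintegral_indicator measurableSet_Iic]
    congr 1
    funext v
    by_cases hv : v ∈ Set.Iic ((t - u) / h)
    · rw [Set.indicator_of_mem hv, Set.indicator_of_mem ((hmem u v).1 hv)]
      simp [hKl]
    · rw [Set.indicator_of_notMem hv,
        Set.indicator_of_notMem (fun hc => hv ((hmem u v).2 hc))]
      simp
  -- the lintegral over u
  have hf_aem : AEMeasurable (fun q : ℝ × ℝ => Kl q.2 * S.indicator (fun _ => 1) q)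
      (μ.prod volume) := by
    refine AEMeasurable.mul ?_ ?_
    · exact (hKlm.comp_quasiMeasurePreserving
        (MeasureTheory.Measure.quasiMeasurePreserving_snd))
    · exact (measurable_const.indicator hSmeas).aemeasurable
  have swap : (∫⁻ u, (∫⁻ v, Kl v * S.indicator (fun _ => 1) (u, v)) ∂μ)
      = ∫⁻ v, Kl v * μ (Set.Iic (t - h * v)) := by
    rw [lintegral_lintegral_swap hf_aem]
    congr 1
    funext v
    rw [lintegral_const_mul' _ _ (by simp [hKl])]
    congr 1
    have : (fun u => S.indicator (fun _ => (1:ℝ≥0∞)) (u, v))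
        = (Set.Iic (t - h * v)).indicator (fun _ => 1) := by
      funext u
      have : (u, v) ∈ S ↔ u ∈ Set.Iic (t - h * v) := by
        simp only [hS, Set.mem_setOf_eq, Set.mem_Iic]
        constructor <;> intro hx <;> linarith
      by_cases hc : (u, v) ∈ S
      · rw [Set.indicator_of_mem hc, Set.indicator_of_mem (this.1 hc)]
      · rw [Set.indicator_of_notMem hc, Set.indicator_of_notMem (fun hm => hc (this.2 hm))]
    rw [this]
    simpa using lintegral_indicator_one (μ := μ) (s := Set.Iic (t - h*v)) measurableSet_Iic
  -- finiteness of the iterated lintegral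
  have hinner_le : ∀ u : ℝ, (∫⁻ v, Kl v * S.indicator (fun _ => 1) (u, v)) ≤ ∫⁻ v, Kl v := by
    intro u
    apply lintegral_mono
    intro v
    dsimp only
    by_cases hc : (u, v) ∈ S
    · rw [Set.indicator_of_mem hc]; simp
    · rw [Set.indicator_of_notMem hc]; simp
  -- LHS as toReal of lintegral
  have hmono : Antitone (fun u => (∫⁻ v, Kl v * S.indicator (fun _ => 1) (u, v))) := by
    intro u1 u2 h12
    apply lintegral_mono
    intro v
    dsimp only
    apply mul_le_mul_right
    by_cases hc : (u2, v) ∈ S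
    · have : (u1, v) ∈ S := by
        simp only [hS, Set.mem_setOf_eq] at hc ⊢
        linarith
      rw [Set.indicator_of_mem hc, Set.indicator_of_mem this]
    · rw [Set.indicator_of_notMem hc]
      exact zero_le
  have lhs_eq : ∫ u, (∫ v in Set.Iic ((t - u) / h), K v) ∂μ
      = (∫⁻ u, (∫⁻ v, Kl v * S.indicator (fun _ => 1) (u, v)) ∂μ).toReal := by
    rw [show (fun u => (∫ v in Set.Iic ((t - u) / h), K v))
      = fun u => (∫⁻ v, Kl v * S.indicator (fun _ => 1) (u, v)).toReal from funext step1]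
    rw [MeasureTheory.integral_toReal (hmono.measurable.aemeasurable) ?_]
    exact Filter.Eventually.of_forall fun u => lt_of_le_of_lt (hinner_le u) hKltot.lt_top
  -- RHS as toReal of lintegral
  have rhs_eq : ∫ v, K v * (μ (Set.Iic (t - h * v))).toReal
      = (∫⁻ v, Kl v * μ (Set.Iic (t - h * v))).toReal := by
    have hFm : Measurable fun v : ℝ => (μ (Set.Iic (t - h * v))).toReal := by
      have hmono2 : Antitone fun v : ℝ => (μ (Set.Iic (t - h * v))).toReal := by
        intro v1 v2 h12
        apply ENNReal.toReal_mono (measure_ne_top μ _)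
        exact measure_mono (Set.Iic_subset_Iic.2 (by nlinarith))
      exact hmono2.measurable
    rw [MeasureTheory.integral_eq_lintegral_of_nonneg_ae
      (Filter.Eventually.of_forall fun v => mul_nonneg (hKpos v) ENNReal.toReal_nonneg)
      (hKint.aestronglyMeasurable.mul hFm.aestronglyMeasurable)]
    congr 1
    apply lintegral_congr_ae
    filter_upwards [] with v
    rw [ENNReal.ofReal_mul (hKpos v), ENNReal.ofReal_toReal (measure_ne_top μ _)]
  rw [lhs_eq, swap, ← rhs_eq]

-- second order Taylor-type estimate for the cdf
lemma cdf_taylor (F g : ℝ → ℝ) (M : ℝ)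
    (hF : ∀ a b : ℝ, F b - F a = ∫ w in a..b, g w)
    (hg : Continuous g)
    (hLip : ∀ x y : ℝ, |g x - g y| ≤ M * |x - y|)
    (t a : ℝ) :
    |F (t - a) - F t + a * g t| ≤ M / 2 * a ^ 2 := by
  have key : F (t - a) - F t + a * g t = ∫ w in t..(t - a), (g w - g t) := by
    rw [intervalIntegral.integral_sub (hg.intervalIntegrable _ _)
      (intervalIntegrable_const)]
    rw [← hF t (t - a)]
    rw [intervalIntegral.integral_const, smul_eq_mul]
    ring
  rw [key]
  have hb : ‖∫ w in t..(t - a), (g w - g t)‖ ≤ abs (∫ w in t..(t - a), M * |w - t|) := by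
    apply intervalIntegral.norm_integral_le_abs_of_norm_le
    · filter_upwards [] with w
      rw [Real.norm_eq_abs]
      exact hLip w t
    · exact (continuous_const.mul (continuous_abs.comp
        (continuous_id.sub continuous_const))).intervalIntegrable _ _
  rw [Real.norm_eq_abs] at hb
  refine hb.trans ?_
  rw [intervalIntegral.integral_const_mul, integral_abs_sub]
  have hM : 0 ≤ M := le_trans (abs_nonneg _) (by simpa using hLip 1 0)
  rw [abs_mul, abs_of_nonneg hM]
  have : |-a * |a| / 2| = a ^ 2 / 2 := by
    rw [abs_div, abs_mul, abs_neg, abs_abs, ← sq_abs a]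
    norm_num [sq, abs_two]
  rw [this]
  ring_nf
  exact le_refl _

-- odd moment vanishes
lemma first_moment_zero (K : ℝ → ℝ) (hKsymm : ∀ u, K (-u) = K u)
    (hKint : Integrable fun v => v * K v) : (∫ v, v * K v) = 0 := by
  have h1 : (∫ v, v * K v) = ∫ v, (-v) * K (-v) := by
    rw [← MeasureTheory.integral_neg_eq_self (fun v => v * K v) volume]
  have h2 : (fun v : ℝ => (-v) * K (-v)) = fun v => -(v * K v) := by
    funext v; rw [hKsymm]; ring
  rw [h2, MeasureTheory.integral_neg] at h1
  linarith

-- the cdf of a measure with continuous density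
lemma cdf_eq_integral (fs : ℝ → ℝ) (hfsc : Continuous fs)
    (μ : Measure ℝ) [IsProbabilityMeasure μ]
    (hfs : μ = MeasureTheory.volume.withDensity fun t => ENNReal.ofReal (fs t)) :
    (Integrable (fun x => max (fs x) 0)) ∧
    ∀ a b : ℝ, (μ (Set.Iic b)).toReal - (μ (Set.Iic a)).toReal
      = ∫ w in a..b, max (fs w) 0 := by
  set g : ℝ → ℝ := fun x => max (fs x) 0 with hg
  have hg0 : ∀ x, 0 ≤ g x := fun x => le_max_right _ _
  have hgc : Continuous g := hfsc.max continuous_const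
  have hofReal : ∀ x, ENNReal.ofReal (fs x) = ENNReal.ofReal (g x) := by
    intro x
    rcases le_or_gt (fs x) 0 with hx | hx
    · rw [ENNReal.ofReal_eq_zero.2 hx, hg]
      simp [max_eq_right hx]
    · rw [hg]; simp [max_eq_left hx.le]
  have htot : (∫⁻ x, ENNReal.ofReal (g x)) = 1 := by
    have h1 : μ Set.univ = 1 := measure_univ
    rw [hfs, withDensity_apply _ MeasurableSet.univ, Measure.restrict_univ] at h1
    rw [← h1]
    exact lintegral_congr fun x => (hofReal x).symm
  have hgint : Integrable g := by
    refine ⟨hgc.aestronglyMeasurable, ?_⟩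
    rw [hasFiniteIntegral_iff_ofReal (Filter.Eventually.of_forall hg0), htot]
    exact ENNReal.one_lt_top
  refine ⟨hgint, fun a b => ?_⟩
  have hIic : ∀ c : ℝ, (μ (Set.Iic c)).toReal = ∫ w in Set.Iic c, g w := by
    intro c
    rw [hfs, withDensity_apply _ measurableSet_Iic]
    rw [MeasureTheory.integral_eq_lintegral_of_nonneg_ae
      (Filter.Eventually.of_forall hg0) hgc.aestronglyMeasurable.restrict]
    congr 1
    exact setLIntegral_congr_fun measurableSet_Iic
      (fun x _ => hofReal x)
  rw [hIic a, hIic b]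
  exact intervalIntegral.integral_Iic_sub_Iic hgint.integrableOn hgint.integrableOn

-- pointwise bias bound
lemma bias_pointwise (μ : Measure ℝ) [IsProbabilityMeasure μ] (K : ℝ → ℝ)
    (hKpos : ∀ u, 0 ≤ K u) (hKint : Integrable K)
    (hKsymm : ∀ u, K (-u) = K u) (hKone : (∫ u, K u) = 1)
    (hKmom : Integrable fun u => u ^ 2 * K u)
    (g : ℝ → ℝ) (M : ℝ)
    (hF : ∀ a b : ℝ, (μ (Set.Iic b)).toReal - (μ (Set.Iic a)).toReal = ∫ w in a..b, g w)
    (hg : Continuous g) (hLip : ∀ x y : ℝ, |g x - g y| ≤ M * |x - y|)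
    (h : ℝ) (hh : 0 < h) (t : ℝ) :
    |(∫ u, (∫ v in Set.Iic ((t - u) / h), K v) ∂μ) - (μ (Set.Iic t)).toReal|
      ≤ M / 2 * h ^ 2 * ∫ v, v ^ 2 * K v := by
  set F : ℝ → ℝ := fun x => (μ (Set.Iic x)).toReal with hFdef
  have hF01 : ∀ x, F x ∈ Set.Icc (0:ℝ) 1 := by
    intro x
    refine ⟨ENNReal.toReal_nonneg, ?_⟩
    simpa using ENNReal.toReal_mono (by simp) (prob_le_one (μ := μ) (s := Set.Iic x))
  have hFmono : Monotone F := by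
    intro x y hxy
    exact ENNReal.toReal_mono (measure_ne_top μ _) (measure_mono (Set.Iic_subset_Iic.2 hxy))
  have hFmeas : Measurable F := hFmono.measurable
  -- integrability facts
  have hf1meas : AEStronglyMeasurable (fun v => K v * F (t - h * v)) volume :=
    hKint.aestronglyMeasurable.mul
      ((hFmeas.comp ((measurable_const.sub (measurable_id.const_mul h)))).aestronglyMeasurable)
  have hf1 : Integrable (fun v => K v * F (t - h * v)) := by
    refine Integrable.mono' hKint hf1meas ?_
    filter_upwards [] with v
    rw [Real.norm_eq_abs, abs_mul, abs_of_nonneg (hKpos v),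
      abs_of_nonneg (hF01 _).1]
    nlinarith [(hF01 (t - h * v)).2, hKpos v]
  have hvK : Integrable (fun v : ℝ => v * K v) := by
    refine Integrable.mono' (hKint.add hKmom) 
      (measurable_id.aestronglyMeasurable.mul hKint.aestronglyMeasurable) ?_
    filter_upwards [] with v
    simp only [Pi.add_apply]
    rw [Real.norm_eq_abs, abs_mul]
    have h1 : |v| ≤ 1 + v ^ 2 := by nlinarith [sq_abs v, abs_nonneg v]
    have h2 : |K v| = K v := abs_of_nonneg (hKpos v)
    rw [h2]
    nlinarith [hKpos v]
  have hmoment : (∫ v, v * K v) = 0 := first_moment_zero K hKsymm hvK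
  -- the error function
  set E : ℝ → ℝ := fun v => F (t - h * v) - F t + h * v * g t with hEdef
  have hEbound : ∀ v, |E v| ≤ M / 2 * (h * v) ^ 2 := by
    intro v
    have := cdf_taylor F g M (fun a b => hF a b) hg hLip t (h * v)
    simpa using this
  have hM : 0 ≤ M := le_trans (abs_nonneg _) (by simpa using hLip 1 0)
  have hEmeas : Measurable E :=
    ((hFmeas.comp (measurable_const.sub (measurable_id.const_mul h))).sub
      measurable_const).add ((measurable_id.const_mul h).mul_const (g t))
  have hfE : Integrable (fun v => K v * E v) := by
    refine Integrable.mono' ((hKmom.const_mul (M / 2 * h ^ 2)))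
      (hKint.aestronglyMeasurable.mul hEmeas.aestronglyMeasurable) ?_
    filter_upwards [] with v
    rw [Real.norm_eq_abs, abs_mul, abs_of_nonneg (hKpos v)]
    have h1 : |E v| ≤ M / 2 * (h * v) ^ 2 := hEbound v
    have h2 : K v * |E v| ≤ K v * (M / 2 * (h * v) ^ 2) :=
      mul_le_mul_of_nonneg_left h1 (hKpos v)
    calc K v * |E v| ≤ K v * (M / 2 * (h * v) ^ 2) := h2
      _ = M / 2 * h ^ 2 * (v ^ 2 * K v) := by ring
  -- Fubini rewriting
  have hfub : (∫ u, (∫ v in Set.Iic ((t - u) / h), K v) ∂μ)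
      = ∫ v, K v * F (t - h * v) := fubini_smooth μ K hKpos hKint h hh t
  have hKFt : Integrable (fun v => K v * F t) := hKint.mul_const _
  have hf3 : Integrable (fun v => K v * (h * v * g t)) := by
    have : (fun v : ℝ => K v * (h * v * g t)) = fun v => (h * g t) * (v * K v) := by
      funext v; ring
    rw [this]
    exact hvK.const_mul _
  have hzero : (∫ v, K v * (h * v * g t)) = 0 := by
    have : (fun v : ℝ => K v * (h * v * g t)) = fun v => (h * g t) * (v * K v) := by
      funext v; ring
    rw [this, MeasureTheory.integral_const_mul, hmoment, mul_zero]
  have hconst : (∫ v, K v * F t) = F t := by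
    rw [MeasureTheory.integral_mul_const, hKone, one_mul]
  have hsplit : (∫ v, K v * F (t - h * v)) - F t = ∫ v, K v * E v := by
    have : (fun v => K v * E v)
        = fun v => (K v * F (t - h * v) - K v * F t) + K v * (h * v * g t) := by
      funext v; simp only [hEdef]; ring
    have hsub : Integrable (fun v => K v * F (t - h * v) - K v * F t) := hf1.sub hKFt
    rw [this, MeasureTheory.integral_add hsub hf3,
      MeasureTheory.integral_sub hf1 hKFt, hzero, hconst, add_zero]
  rw [hfub, show (μ (Set.Iic t)).toReal = F t from rfl, hsplit]
  calc |∫ v, K v * E v| ≤ ∫ v, ‖K v * E v‖ := by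
        rw [← Real.norm_eq_abs]
        exact norm_integral_le_integral_norm _
    _ ≤ ∫ v, M / 2 * h ^ 2 * (v ^ 2 * K v) := by
        apply integral_mono hfE.norm (hKmom.const_mul _)
        intro v
        show ‖K v * E v‖ ≤ M / 2 * h ^ 2 * (v ^ 2 * K v)
        rw [Real.norm_eq_abs, abs_mul, abs_of_nonneg (hKpos v)]
        calc K v * |E v| ≤ K v * (M / 2 * (h * v) ^ 2) :=
              mul_le_mul_of_nonneg_left (hEbound v) (hKpos v)
          _ = M / 2 * h ^ 2 * (v ^ 2 * K v) := by ring
    _ = M / 2 * h ^ 2 * ∫ v, v ^ 2 * K v := MeasureTheory.integral_const_mul _ _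


/-- bias of the kernel-smoothed ranking criterion:
`|W̃_{φ,h}(s) − W_φ(s)| ≤ ‖φ'‖_∞·(M/2)·h²·μ₂`. -/
theorem stmt13 {d : ℕ} (G H : Measure (Fin d → ℝ))
    [IsProbabilityMeasure G] [IsProbabilityMeasure H]
    (p : ℝ) (hp : p ∈ Set.Ioo (0 : ℝ) 1)
    (s : (Fin d → ℝ) → ℝ) (hs : Measurable s)
    (fs fs' : ℝ → ℝ) (M : ℝ)
    (hfs : (ENNReal.ofReal p • G.map s + ENNReal.ofReal (1 - p) • H.map s)
            = MeasureTheory.volume.withDensity fun t => ENNReal.ofReal (fs t))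
    (hfsd : ∀ t, HasDerivAt fs (fs' t) t) (hfs'bdd : ∀ t, |fs' t| ≤ M)
    (φ φd : ℝ → ℝ) (hφd : ∀ t, HasDerivAt φ (φd t) t) (hφdc : Continuous φd)
    (K : ℝ → ℝ) (hKpos : ∀ u, 0 ≤ K u) (hKint : Integrable K)
    (hKsymm : ∀ u, K (-u) = K u)
    (hKone : (∫ u, K u) = 1)
    (hKmom : Integrable fun u => u ^ 2 * K u)
    (h : ℝ) (hh : 0 < h) :
    |Wsmooth G H p φ s K h - Wperf G H p φ s|
      ≤ (⨆ u : Set.Icc (0 : ℝ) 1, |φd u|) * (M / 2) * h ^ 2 * ∫ u, u ^ 2 * K u := by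
  obtain ⟨hp0, hp1⟩ := hp
  set μ : Measure ℝ := ENNReal.ofReal p • G.map s + ENNReal.ofReal (1 - p) • H.map s with hμ
  haveI hGmap : IsProbabilityMeasure (G.map s) := Measure.isProbabilityMeasure_map hs.aemeasurable
  haveI hHmap : IsProbabilityMeasure (H.map s) := Measure.isProbabilityMeasure_map hs.aemeasurable
  haveI hμprob : IsProbabilityMeasure μ := by
    constructor
    rw [hμ]
    rw [Measure.add_apply, Measure.smul_apply, Measure.smul_apply, measure_univ, measure_univ,
      smul_eq_mul, smul_eq_mul, mul_one, mul_one,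
      ← ENNReal.ofReal_add hp0.le (by linarith)]
    norm_num
  -- pooled cdf as measure of Iic
  have hpooled : ∀ t, pooledCDF G H p s t = (μ (Set.Iic t)).toReal := by
    intro t
    rw [hμ, Measure.add_apply, Measure.smul_apply, Measure.smul_apply, smul_eq_mul, smul_eq_mul,
      ENNReal.toReal_add (ENNReal.mul_ne_top ENNReal.ofReal_ne_top (measure_ne_top _ _))
        (ENNReal.mul_ne_top ENNReal.ofReal_ne_top (measure_ne_top _ _)),
      ENNReal.toReal_mul, ENNReal.toReal_mul,
      ENNReal.toReal_ofReal hp0.le, ENNReal.toReal_ofReal (by linarith : (0:ℝ) ≤ 1 - p)]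
    rfl
  have hsm : ∀ t, smoothedCDF G H p s K h t
      = ∫ u, (∫ v in Set.Iic ((t - u) / h), K v) ∂μ := fun t => rfl
  -- fs facts
  have hfsc : Continuous fs := by
    rw [continuous_iff_continuousAt]
    exact fun t => (hfsd t).continuousAt
  have hM : 0 ≤ M := le_trans (abs_nonneg _) (hfs'bdd 0)
  have hfsLip : ∀ x y : ℝ, |fs x - fs y| ≤ M * |x - y| := by
    intro x y
    have := convex_univ.norm_image_sub_le_of_norm_hasDerivWithin_le
      (f := fs) (f' := fs') (fun z _ => (hfsd z).hasDerivWithinAt)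
      (fun z _ => by simpa [Real.norm_eq_abs] using hfs'bdd z)
      (Set.mem_univ y) (Set.mem_univ x)
    simpa [Real.norm_eq_abs] using this
  set g : ℝ → ℝ := fun x => max (fs x) 0 with hgdef
  have hgLip : ∀ x y : ℝ, |g x - g y| ≤ M * |x - y| :=
    fun x y => le_trans (abs_max_sub_max_le_abs _ _ _) (hfsLip x y)
  have hgc : Continuous g := hfsc.max continuous_const
  obtain ⟨hgint, hFdiff⟩ := cdf_eq_integral fs hfsc μ (by rw [hμ]; exact hfs)
  -- pointwise bias bound
  set B : ℝ := M / 2 * h ^ 2 * ∫ u, u ^ 2 * K u with hB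
  have hbias : ∀ t, |smoothedCDF G H p s K h t - pooledCDF G H p s t| ≤ B := by
    intro t
    rw [hsm t, hpooled t]
    exact bias_pointwise μ K hKpos hKint hKsymm hKone hKmom g M hFdiff hgc hgLip h hh t
  -- the kernel primitive κ
  set κ : ℝ → ℝ := fun x => ∫ v in Set.Iic x, K v with hκdef
  have hκ0 : ∀ x, 0 ≤ κ x := fun x =>
    setIntegral_nonneg measurableSet_Iic (fun v _ => hKpos v)
  have hκ1 : ∀ x, κ x ≤ 1 := by
    intro x
    rw [← hKone]
    exact setIntegral_le_integral hKint (Filter.Eventually.of_forall hKpos)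
  have hκmono : Monotone κ := by
    intro a b hab
    apply setIntegral_mono_set hKint.integrableOn
      (Filter.Eventually.of_forall hKpos)
    exact Filter.Eventually.of_forall (Set.Iic_subset_Iic.2 hab)
  have hκint : ∀ t : ℝ, Integrable (fun u => κ ((t - u) / h)) μ := by
    intro t
    refine Integrable.mono' (integrable_const (1:ℝ)) ?_ ?_
    · have : Measurable κ := hκmono.measurable
      exact (this.comp ((measurable_const.sub measurable_id).div_const h)).aestronglyMeasurable
    · filter_upwards [] with u
      rw [Real.norm_eq_abs, abs_of_nonneg (hκ0 _)]
      exact hκ1 _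
  -- values of the cdfs in [0,1]
  have hpooled01 : ∀ t, pooledCDF G H p s t ∈ Set.Icc (0:ℝ) 1 := by
    intro t
    rw [hpooled t]
    exact ⟨ENNReal.toReal_nonneg, by
      simpa using ENNReal.toReal_mono (by simp) (prob_le_one (μ := μ) (s := Set.Iic t))⟩
  have hsm01 : ∀ t, smoothedCDF G H p s K h t ∈ Set.Icc (0:ℝ) 1 := by
    intro t
    rw [hsm t]
    constructor
    · exact integral_nonneg fun u => hκ0 _
    · calc (∫ u, κ ((t - u) / h) ∂μ) ≤ ∫ _, (1:ℝ) ∂μ :=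
            integral_mono (hκint t) (integrable_const 1) fun u => hκ1 _
        _ = 1 := by simp
  -- monotonicity hence measurability of the smoothed cdf
  have hsmono : Monotone (fun t => smoothedCDF G H p s K h t) := by
    intro t1 t2 h12
    show smoothedCDF G H p s K h t1 ≤ smoothedCDF G H p s K h t2
    rw [hsm t1, hsm t2]
    apply integral_mono (hκint t1) (hκint t2)
    intro u
    exact hκmono ((div_le_div_iff_of_pos_right hh).mpr (by linarith))
  -- MVT for φ on [0,1]
  set Csup : ℝ := ⨆ u : Set.Icc (0 : ℝ) 1, |φd u| with hCsup
  have hbdd : BddAbove (Set.range fun u : Set.Icc (0:ℝ) 1 => |φd ↑u|) := by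
    have hcpt : IsCompact ((fun x => |φd x|) '' Set.Icc (0:ℝ) 1) :=
      isCompact_Icc.image hφdc.abs
    apply BddAbove.mono _ hcpt.bddAbove
    rintro _ ⟨u, rfl⟩
    exact ⟨u, u.2, rfl⟩
  have hφdle : ∀ x ∈ Set.Icc (0:ℝ) 1, |φd x| ≤ Csup := fun x hx =>
    le_ciSup hbdd (⟨x, hx⟩ : Set.Icc (0:ℝ) 1)
  have hCsup0 : 0 ≤ Csup :=
    le_trans (abs_nonneg (φd 0)) (hφdle 0 (by norm_num))
  have hMVT : ∀ a b : ℝ, a ∈ Set.Icc (0:ℝ) 1 → b ∈ Set.Icc (0:ℝ) 1 →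
      |φ b - φ a| ≤ Csup * |b - a| := by
    intro a b ha hb
    have := (convex_Icc (0:ℝ) 1).norm_image_sub_le_of_norm_hasDerivWithin_le
      (f := φ) (f' := φd) (fun x _ => (hφd x).hasDerivWithinAt)
      (fun x hx => by simpa [Real.norm_eq_abs] using hφdle x hx) ha hb
    simpa [Real.norm_eq_abs] using this
  -- integrability over G
  have hφc : Continuous φ := by
    rw [continuous_iff_continuousAt]
    exact fun t => (hφd t).continuousAt
  obtain ⟨Cφ, hCφ⟩ := isCompact_Icc.exists_bound_of_continuousOn
    (s := Set.Icc (0:ℝ) 1) hφc.continuousOn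
  have hint1 : Integrable (fun x => φ (smoothedCDF G H p s K h (s x))) G := by
    refine Integrable.mono' (integrable_const Cφ)
      ((hφc.measurable.comp (hsmono.measurable.comp hs)).aestronglyMeasurable) ?_
    filter_upwards [] with x
    exact hCφ _ (hsm01 (s x))
  have hpmono : Monotone (fun t => pooledCDF G H p s t) := by
    intro t1 t2 h12
    show pooledCDF G H p s t1 ≤ pooledCDF G H p s t2
    rw [hpooled t1, hpooled t2]
    exact ENNReal.toReal_mono (measure_ne_top μ _)
      (measure_mono (Set.Iic_subset_Iic.2 h12))
  have hint2 : Integrable (fun x => φ (pooledCDF G H p s (s x))) G := by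
    refine Integrable.mono' (integrable_const Cφ)
      ((hφc.measurable.comp (hpmono.measurable.comp hs)).aestronglyMeasurable) ?_
    filter_upwards [] with x
    exact hCφ _ (hpooled01 (s x))
  -- conclude
  have hWdiff : Wsmooth G H p φ s K h - Wperf G H p φ s
      = ∫ x, (φ (smoothedCDF G H p s K h (s x)) - φ (pooledCDF G H p s (s x))) ∂G := by
    rw [Wsmooth, Wperf, integral_sub hint1 hint2]
  rw [hWdiff, ← Real.norm_eq_abs]
  have hnorm : ∀ x, ‖φ (smoothedCDF G H p s K h (s x)) - φ (pooledCDF G H p s (s x))‖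
      ≤ Csup * B := by
    intro x
    rw [Real.norm_eq_abs]
    calc |φ (smoothedCDF G H p s K h (s x)) - φ (pooledCDF G H p s (s x))|
        ≤ Csup * |smoothedCDF G H p s K h (s x) - pooledCDF G H p s (s x)| :=
          hMVT _ _ (hpooled01 _) (hsm01 _)
      _ ≤ Csup * B := mul_le_mul_of_nonneg_left (hbias _) hCsup0
  calc ‖∫ x, (φ (smoothedCDF G H p s K h (s x)) - φ (pooledCDF G H p s (s x))) ∂G‖
      ≤ Csup * B * (G Set.univ).toReal :=
        norm_integral_le_of_norm_le_const (Filter.Eventually.of_forall hnorm)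
    _ = Csup * B := by simp
    _ = Csup * (M / 2) * h ^ 2 * ∫ u, u ^ 2 * K u := by rw [hB]; ring
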